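/- Consider the scalar system ż = −z + ξ1²ξ2, ξ̇1 = v1 + 4zξ1ξ2 − 4ξ1³ξ2² − (4/3)ξ1^{1/3}, ξ̇2 = ξ3, ξ̇3 = v2 + 2zξ1² − 2ξ1⁴ξ2 − 2ξ2 − ξ3, with output y = (ξ1, ξ2). With storage function V(z,ξ) = (z − ξ1²ξ2)² + ξ1^{4/3} + ξ2² + (1/2)ξ3², every C^1 solution satisfies V̇ = −2ż² + v1ξ̇1 + v2ξ̇2 − ξ̇1² − ξ̇2² ≤ vᵀẏ − ‖ẏ‖². Hence the system is nonlinear OSNI with degree of output strictness 1. -/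

import Mathlib

/-- The real cube root of `x`. -/
noncomputable def realCbrt (x : ℝ) : ℝ :=
  if 0 ≤ x then x ^ ((1:ℝ)/3) else -((-x) ^ ((1:ℝ)/3))



lemma abs_realCbrt (x : ℝ) : |realCbrt x| = |x| ^ ((1:ℝ)/3) := by
  unfold realCbrt
  rcases le_or_gt 0 x with h | h
  · rw [if_pos h, abs_of_nonneg h, abs_of_nonneg (Real.rpow_nonneg h _)]
  · rw [if_neg (not_le.mpr h), abs_of_neg h, abs_neg,
      abs_of_nonneg (Real.rpow_nonneg (by linarith) _)]

lemma cbrt_tendsto0 : Filter.Tendsto realCbrt (nhds 0) (nhds 0) := by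
  apply squeeze_zero_norm (a := fun y => |y| ^ ((1:ℝ)/3))
  · intro y; rw [Real.norm_eq_abs, abs_realCbrt]
  · have : Filter.Tendsto (fun y : ℝ => |y| ^ ((1:ℝ)/3)) (nhds 0) (nhds (|(0:ℝ)| ^ ((1:ℝ)/3))) := by
      apply ContinuousAt.tendsto
      exact (Real.continuousAt_rpow_const _ _ (Or.inr (by norm_num))).comp continuous_abs.continuousAt
    simpa using this

lemma habs (x : ℝ) : HasDerivAt (fun y : ℝ => |y| ^ ((4:ℝ)/3)) ((4/3) * realCbrt x) x := by
  rcases lt_trichotomy x 0 with hx | hx | hx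
  · -- x < 0
    have hd : HasDerivAt (fun y : ℝ => (-y) ^ ((4:ℝ)/3))
        (((4:ℝ)/3 * (-x) ^ ((4:ℝ)/3 - 1)) * (-1)) x := by
      exact (Real.hasDerivAt_rpow_const (p := (4:ℝ)/3) (Or.inl (by linarith))).comp x (hasDerivAt_neg x)
    have heq : (fun y : ℝ => |y| ^ ((4:ℝ)/3)) =ᶠ[nhds x] (fun y : ℝ => (-y) ^ ((4:ℝ)/3)) := by
      filter_upwards [eventually_lt_nhds hx] with y hy
      rw [abs_of_neg hy]
    have : HasDerivAt (fun y : ℝ => |y| ^ ((4:ℝ)/3))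
        (((4:ℝ)/3 * (-x) ^ ((4:ℝ)/3 - 1)) * (-1)) x := hd.congr_of_eventuallyEq heq
    convert this using 1
    unfold realCbrt
    rw [if_neg (not_le.mpr hx)]
    norm_num
  · -- x = 0
    subst hx
    have h0 : realCbrt 0 = 0 := by unfold realCbrt; simp
    rw [h0, mul_zero]
    rw [hasDerivAt_iff_tendsto_slope]
    have heq : (slope (fun y : ℝ => |y| ^ ((4:ℝ)/3)) 0) =ᶠ[nhdsWithin 0 {(0:ℝ)}ᶜ] realCbrt := by
      filter_upwards [self_mem_nhdsWithin] with y hy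
      have hy0 : y ≠ 0 := hy
      rw [slope_def_field]
      simp only [abs_zero]
      rw [Real.zero_rpow (by norm_num)]
      rcases lt_or_gt_of_ne hy0 with h | h
      · rw [abs_of_neg h]
        unfold realCbrt
        rw [if_neg (not_le.mpr h)]
        rw [sub_zero, sub_zero, div_eq_iff hy0]
        rw [show (4:ℝ)/3 = 1/3 + 1 by norm_num, Real.rpow_add_one (by linarith : -y ≠ 0)]
        ring
      · rw [abs_of_pos h]
        unfold realCbrt
        rw [if_pos h.le]
        rw [sub_zero, sub_zero, div_eq_iff hy0]
        rw [show (4:ℝ)/3 = 1/3 + 1 by norm_num, Real.rpow_add_one (ne_of_gt h)]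
    refine Filter.Tendsto.congr' heq.symm ?_
    exact cbrt_tendsto0.mono_left nhdsWithin_le_nhds
  · -- x > 0
    have hd : HasDerivAt (fun y : ℝ => y ^ ((4:ℝ)/3)) ((4:ℝ)/3 * x ^ ((4:ℝ)/3 - 1)) x :=
      Real.hasDerivAt_rpow_const (Or.inl (ne_of_gt hx))
    have heq : (fun y : ℝ => |y| ^ ((4:ℝ)/3)) =ᶠ[nhds x] (fun y : ℝ => y ^ ((4:ℝ)/3)) := by
      filter_upwards [eventually_gt_nhds hx] with y hy
      rw [abs_of_pos hy]
    have := hd.congr_of_eventuallyEq heq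
    refine this.congr_deriv ?_
    unfold realCbrt
    rw [if_pos hx.le]
    norm_num
/-- for the scalar closed-loop system of the example, the storage
function V(z,ξ) = (z − ξ1²ξ2)² + |ξ1|^{4/3} + ξ2² + (1/2)ξ3² satisfies along
every C¹ solution
V̇ = −2ż² + v1ξ̇1 + v2ξ̇2 − ξ̇1² − ξ̇2² ≤ vᵀẏ − ‖ẏ‖²,
so the system is nonlinear OSNI with degree of output strictness 1. -/
theorem stmt8 (z ξ1 ξ2 ξ3 v1 v2 z' ξ1' ξ2' ξ3' : ℝ → ℝ)
    (hz : ∀ t, HasDerivAt z (z' t) t)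
    (hξ1 : ∀ t, HasDerivAt ξ1 (ξ1' t) t)
    (hξ2 : ∀ t, HasDerivAt ξ2 (ξ2' t) t)
    (hξ3 : ∀ t, HasDerivAt ξ3 (ξ3' t) t)
    (hz' : ∀ t, z' t = -(z t) + (ξ1 t)^2 * ξ2 t)
    (hξ1' : ∀ t, ξ1' t = v1 t + 4 * z t * ξ1 t * ξ2 t - 4 * (ξ1 t)^3 * (ξ2 t)^2
      - (4/3) * realCbrt (ξ1 t))
    (hξ2' : ∀ t, ξ2' t = ξ3 t)
    (hξ3' : ∀ t, ξ3' t = v2 t + 2 * z t * (ξ1 t)^2 - 2 * (ξ1 t)^4 * ξ2 t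
      - 2 * ξ2 t - ξ3 t) :
    ∀ t : ℝ,
      deriv (fun s => (z s - (ξ1 s)^2 * ξ2 s)^2 + |ξ1 s| ^ ((4:ℝ)/3)
          + (ξ2 s)^2 + (1/2) * (ξ3 s)^2) t
        = -2 * (z' t)^2 + v1 t * ξ1' t + v2 t * ξ2' t - (ξ1' t)^2 - (ξ2' t)^2 ∧
      deriv (fun s => (z s - (ξ1 s)^2 * ξ2 s)^2 + |ξ1 s| ^ ((4:ℝ)/3)
          + (ξ2 s)^2 + (1/2) * (ξ3 s)^2) t
        ≤ (v1 t * ξ1' t + v2 t * ξ2' t) - ((ξ1' t)^2 + (ξ2' t)^2) := by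
  intro t
  have h1 : HasDerivAt (fun s => (z s - (ξ1 s)^2 * ξ2 s)^2)
      (2 * (z t - (ξ1 t)^2 * ξ2 t) * (z' t - (2 * ξ1 t * ξ1' t * ξ2 t + (ξ1 t)^2 * ξ2' t))) t := by
    have := ((hz t).sub (((hξ1 t).pow 2).mul (hξ2 t))).pow 2
    refine this.congr_deriv ?_
    push_cast
    simp only [Pi.sub_apply, Pi.mul_apply, Pi.pow_apply]
    ring
  have h2 : HasDerivAt (fun s => |ξ1 s| ^ ((4:ℝ)/3)) ((4/3) * realCbrt (ξ1 t) * ξ1' t) t := by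
    have := (habs (ξ1 t)).comp t (hξ1 t)
    exact this
  have h3 : HasDerivAt (fun s => (ξ2 s)^2) (2 * ξ2 t * ξ2' t) t := by
    have := (hξ2 t).pow 2
    refine this.congr_deriv ?_
    push_cast
    ring
  have h4 : HasDerivAt (fun s => (1/2) * (ξ3 s)^2) (ξ3 t * ξ3' t) t := by
    have := ((hξ3 t).pow 2).const_mul (1/2 : ℝ)
    refine this.congr_deriv ?_
    push_cast
    ring
  have hV := ((h1.add h2).add h3).add h4
  have hd : deriv (fun s => (z s - (ξ1 s)^2 * ξ2 s)^2 + |ξ1 s| ^ ((4:ℝ)/3)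
      + (ξ2 s)^2 + (1/2) * (ξ3 s)^2) t
      = 2 * (z t - (ξ1 t)^2 * ξ2 t) * (z' t - (2 * ξ1 t * ξ1' t * ξ2 t + (ξ1 t)^2 * ξ2' t))
        + (4/3) * realCbrt (ξ1 t) * ξ1' t + 2 * ξ2 t * ξ2' t + ξ3 t * ξ3' t := hV.deriv
  have key : deriv (fun s => (z s - (ξ1 s)^2 * ξ2 s)^2 + |ξ1 s| ^ ((4:ℝ)/3)
      + (ξ2 s)^2 + (1/2) * (ξ3 s)^2) t
      = -2 * (z' t)^2 + v1 t * ξ1' t + v2 t * ξ2' t - (ξ1' t)^2 - (ξ2' t)^2 := by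
    rw [hd]
    have e1 := hz' t
    have e2 := hξ1' t
    have e3 := hξ2' t
    have e4 := hξ3' t
    have hv1 : v1 t = ξ1' t - 4 * z t * ξ1 t * ξ2 t + 4 * (ξ1 t)^3 * (ξ2 t)^2
        + (4/3) * realCbrt (ξ1 t) := by linarith
    have hv2 : v2 t = ξ3' t - 2 * z t * (ξ1 t)^2 + 2 * (ξ1 t)^4 * ξ2 t + 2 * ξ2 t + ξ3 t := by
      linarith
    rw [hv1, hv2, e1, e3]
    ring
  exact ⟨key, by rw [key]; nlinarith [sq_nonneg (z' t)]⟩
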